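/- Two subgroups P and Q of Γ of order p are conjugate in Γ if and only if they have the same image under the projection pr : Γ → Γ_ab onto the abelianization of Γ. -/

import Mathlib

open Multiplicative

/-- The action of `GL n ℤ` on `ℤⁿ`, as a homomorphism
`Multiplicative (ZMod p) →* MulAut (Multiplicative (Fin n → ℤ))`. -/
def matAutHom {p n : ℕ} (ρ : Multiplicative (ZMod p) →* Matrix.GeneralLinearGroup (Fin n) ℤ) :
    Multiplicative (ZMod p) →* MulAut (Multiplicative (Fin n → ℤ)) where
  toFun g :=
    { toFun := fun v => Multiplicative.ofAdd ((ρ g : Matrix (Fin n) (Fin n) ℤ).mulVec v.toAdd)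
      invFun := fun v =>
        Multiplicative.ofAdd ((((ρ g)⁻¹ : Matrix.GeneralLinearGroup (Fin n) ℤ) :
          Matrix (Fin n) (Fin n) ℤ).mulVec v.toAdd)
      left_inv := fun v => by simp [Matrix.mulVec_mulVec]
      right_inv := fun v => by simp [Matrix.mulVec_mulVec]
      map_mul' := fun u v => by simp [Matrix.mulVec_add] }
  map_one' := by ext v; simp
  map_mul' g h := by ext v; simp [Matrix.mulVec_mulVec]

/-- The group `Γ = ℤⁿ ⋊_ρ ℤ/p`. -/
abbrev Gamma {p n : ℕ} (ρ : Multiplicative (ZMod p) →* Matrix.GeneralLinearGroup (Fin n) ℤ) :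
    Type :=
  SemidirectProduct (Multiplicative (Fin n → ℤ)) (Multiplicative (ZMod p)) (matAutHom ρ)

section aux

variable {p n : ℕ} (ρ : Multiplicative (ZMod p) →* Matrix.GeneralLinearGroup (Fin n) ℤ)

lemma matAutHom_apply (g : Multiplicative (ZMod p)) (v : Multiplicative (Fin n → ℤ)) :
    matAutHom ρ g v = Multiplicative.ofAdd ((ρ g : Matrix (Fin n) (Fin n) ℤ).mulVec v.toAdd) :=
  rfl

/-- For `g ≠ 1`, every `ρ h - 1` is a right multiple of `ρ g - 1`. -/
lemma geo (hp : p.Prime) {g : Multiplicative (ZMod p)} (hg : g ≠ 1)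
    (h : Multiplicative (ZMod p)) :
    ∃ B : Matrix (Fin n) (Fin n) ℤ,
      ((ρ h : Matrix (Fin n) (Fin n) ℤ) - 1) = ((ρ g : Matrix (Fin n) (Fin n) ℤ) - 1) * B := by
  haveI : Fact p.Prime := ⟨hp⟩
  have ha : toAdd g ≠ 0 := by
    simpa using hg
  set c : ZMod p := toAdd h * (toAdd g)⁻¹ with hc
  have hgh : h = g ^ c.val := by
    apply toAdd.injective
    rw [toAdd_pow, nsmul_eq_mul]
    rw [ZMod.natCast_val, ZMod.cast_id, hc]
    field_simp
  refine ⟨∑ i ∈ Finset.range c.val, (ρ g : Matrix (Fin n) (Fin n) ℤ) ^ i, ?_⟩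
  rw [mul_geom_sum, hgh, map_pow, Units.val_pow_eq_pow_val]

def Kgp (g : Multiplicative (ZMod p)) : Subgroup (Gamma ρ) where
  carrier := {z | z.right = 1 ∧ ∃ w : Fin n → ℤ,
    ((ρ g : Matrix (Fin n) (Fin n) ℤ) - 1).mulVec w = toAdd z.left}
  one_mem' := ⟨rfl, 0, by simp⟩
  mul_mem' := by
    rintro a b ⟨ha, wa, hwa⟩ ⟨hb, wb, hwb⟩
    refine ⟨by simp [ha, hb], wa + wb, ?_⟩
    rw [SemidirectProduct.mul_left, ha, map_one]
    simp [Matrix.mulVec_add, hwa, hwb]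
  inv_mem' := by
    rintro a ⟨ha, wa, hwa⟩
    refine ⟨by simp [ha], -wa, ?_⟩
    rw [SemidirectProduct.inv_left, ha]
    simp [Matrix.mulVec_neg, hwa]

lemma commutator_le_Kgp (hp : p.Prime) {g : Multiplicative (ZMod p)} (hg : g ≠ 1) :
    commutator (Gamma ρ) ≤ Kgp ρ g := by
  rw [commutator_def, Subgroup.commutator_le]
  rintro ⟨a, h⟩ - ⟨b, k⟩ -
  obtain ⟨Bk, hBk⟩ := geo ρ hp hg k
  obtain ⟨Bh, hBh⟩ := geo ρ hp hg h
  rw [commutatorElement_def]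
  refine ⟨?_, Bk.mulVec (-toAdd a) + Bh.mulVec (toAdd b), ?_⟩
  · simp only [SemidirectProduct.mul_right, SemidirectProduct.inv_right]
    simp [mul_comm, mul_assoc, mul_left_comm]
  · simp only [SemidirectProduct.mul_left, SemidirectProduct.inv_left,
      SemidirectProduct.mul_right, SemidirectProduct.inv_right, matAutHom_apply, toAdd_mul, toAdd_ofAdd, toAdd_inv,
      Matrix.mulVec_neg, Matrix.mulVec_add, Matrix.mulVec_mulVec]
    rw [← hBk, ← hBh, ← Units.val_mul, ← map_mul, ← Units.val_mul, ← map_mul,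
      mul_inv_cancel_comm]
    simp only [mul_inv_cancel, map_one, Units.val_one, Matrix.one_mulVec, Matrix.sub_mulVec,
      Matrix.one_mulVec]
    abel

lemma eq_zpowers_of_mem {G : Type*} [Group G] (hp : p.Prime) (P : Subgroup G)
    (hP : Nat.card P = p) {x : G} (hx : x ∈ P) (hx1 : x ≠ 1) :
    P = Subgroup.zpowers x ∧ orderOf x = p := by
  haveI : Finite P := Nat.finite_of_card_ne_zero (by rw [hP]; exact hp.ne_zero)
  have hox : orderOf x = p := by
    have h1 : orderOf (⟨x, hx⟩ : P) ∣ p := hP ▸ orderOf_dvd_natCard _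
    rw [show x = ((⟨x, hx⟩ : P) : G) from rfl, Subgroup.orderOf_coe]
    rcases (Nat.dvd_prime hp).mp h1 with h | h
    · exact absurd (congrArg Subtype.val (orderOf_eq_one_iff.mp h)) hx1
    · exact h
  refine ⟨(Subgroup.eq_of_le_of_card_ge (Subgroup.zpowers_le.mpr hx) ?_).symm, hox⟩
  rw [hP, Nat.card_zpowers, hox]

lemma exists_gen {G : Type*} [Group G] (hp : p.Prime) (P : Subgroup G) (hP : Nat.card P = p) :
    ∃ x : G, x ∈ P ∧ P = Subgroup.zpowers x ∧ orderOf x = p := by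
  haveI : Finite P := Nat.finite_of_card_ne_zero (by rw [hP]; exact hp.ne_zero)
  haveI : Nontrivial P := Finite.one_lt_card_iff_nontrivial.mp (hP ▸ hp.one_lt)
  obtain ⟨x, hx⟩ := exists_ne (1 : P)
  have hx1 : (x : G) ≠ 1 := fun h => hx (Subtype.ext h)
  obtain ⟨h1, h2⟩ := eq_zpowers_of_mem hp P hP x.2 hx1
  exact ⟨x, x.2, h1, h2⟩
end aux

/-- Two subgroups `P`, `Q` of `Γ = ℤⁿ ⋊_ρ ℤ/p` of order `p` are conjugate in `Γ` if and only
if they have the same image under the projection `pr : Γ → Γ_ab` onto the abelianization. -/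
theorem conjugate_iff_same_image_in_abelianization (p n : ℕ) (hp : p.Prime) (hodd : Odd p)
    (hn : 0 < n)
    (ρ : Multiplicative (ZMod p) →* Matrix.GeneralLinearGroup (Fin n) ℤ)
    (hfree : ∀ g : Multiplicative (ZMod p), g ≠ 1 → ∀ v : Fin n → ℤ,
      (ρ g : Matrix (Fin n) (Fin n) ℤ).mulVec v = v → v = 0)
    (P Q : Subgroup (Gamma ρ)) (hP : Nat.card P = p) (hQ : Nat.card Q = p) :
    (∃ γ : Gamma ρ, Subgroup.map (MulAut.conj γ).toMonoidHom P = Q) ↔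
      Subgroup.map (Abelianization.of (G := Gamma ρ)) P =
        Subgroup.map (Abelianization.of (G := Gamma ρ)) Q := by
  constructor
  · rintro ⟨γ, rfl⟩
    rw [Subgroup.map_map]
    congr 1
    ext z
    show Abelianization.of z = Abelianization.of (γ * z * γ⁻¹)
    rw [map_mul, map_mul, map_inv, mul_inv_cancel_comm]
  · intro hmap
    obtain ⟨x, hxP, hPz, hxord⟩ := exists_gen hp P hP
    obtain ⟨y, hyQ, hQz, hyord⟩ := exists_gen hp Q hQ
    -- the `ZMod p`-component of `x` is nontrivial
    have hxr : x.right ≠ 1 := by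
      intro h1
      have hx1 : x = SemidirectProduct.inl x.left := by
        ext
        · rfl
        · exact h1
      have hxp : x ^ p = 1 := orderOf_dvd_iff_pow_eq_one.mp (by rw [hxord])
      rw [hx1, ← map_pow, ← map_one SemidirectProduct.inl] at hxp
      have h2 : x.left ^ p = 1 := SemidirectProduct.inl_injective hxp
      have h3 : x.left = 1 := by
        have := congrArg toAdd h2
        rw [toAdd_pow, toAdd_one] at this
        apply toAdd.injective
        rw [toAdd_one]
        funext i
        have h4 := congrFun this i
        simp only [Pi.smul_apply, smul_eq_mul, nsmul_eq_mul, Pi.zero_apply] at h4 ⊢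
        rcases mul_eq_zero.mp h4 with h | h
        · exact absurd h (by exact_mod_cast hp.ne_zero)
        · exact h
      have : x = 1 := by rw [hx1, h3, map_one]
      rw [this, orderOf_one] at hxord
      exact hp.one_lt.ne hxord
    -- `of x` lies in the image of `Q`, hence equals `of (y ^ k)` for some `k`
    have h1 : Abelianization.of x ∈ Subgroup.map (Abelianization.of (G := Gamma ρ)) Q :=
      hmap ▸ ⟨x, hxP, rfl⟩
    rw [hQz, MonoidHom.map_zpowers] at h1
    obtain ⟨k, hk⟩ := Subgroup.mem_zpowers_iff.mp h1
    have hk' : Abelianization.of (y ^ k) = Abelianization.of x := by rw [map_zpow]; exact hk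
    have hcomm : x⁻¹ * y ^ k ∈ commutator (Gamma ρ) :=
      QuotientGroup.eq.mp hk'.symm
    obtain ⟨hr, w, hw⟩ := commutator_le_Kgp ρ hp hxr hcomm
    -- the `ZMod p`-components of `x` and `y ^ k` agree
    have hyk_r : (y ^ k).right = x.right := by
      rw [SemidirectProduct.mul_right, SemidirectProduct.inv_right] at hr
      exact (inv_mul_eq_one.mp hr).symm
    have hyk_ne : y ^ k ≠ 1 := by
      intro h
      rw [h, SemidirectProduct.one_right] at hyk_r
      exact hxr hyk_r.symm
    have hykQ : y ^ k ∈ Q := by rw [hQz]; exact Subgroup.zpow_mem _ (Subgroup.mem_zpowers y) k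
    obtain ⟨hQz', -⟩ := eq_zpowers_of_mem hp Q hQ hykQ hyk_ne
    -- construct the conjugating element
    set g := x.right with hg
    set A := toAdd x.left with hA
    set B := toAdd (y ^ k).left with hB
    have hw' : ((ρ g : Matrix (Fin n) (Fin n) ℤ) - 1).mulVec w
        = ((ρ g⁻¹ : Matrix (Fin n) (Fin n) ℤ)).mulVec (B - A) := by
      rw [hw]
      simp only [SemidirectProduct.mul_left, SemidirectProduct.inv_left,
        SemidirectProduct.inv_right, matAutHom_apply, toAdd_mul, toAdd_ofAdd, toAdd_inv]
      rw [← hA, ← hB, sub_eq_neg_add, Matrix.mulVec_add, Matrix.mulVec_neg]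
    set C : Fin n → ℤ := (ρ g : Matrix (Fin n) (Fin n) ℤ).mulVec w with hC
    have hkey : ((ρ g : Matrix (Fin n) (Fin n) ℤ) - 1).mulVec C = B - A := by
      have hcom : ((ρ g : Matrix (Fin n) (Fin n) ℤ) - 1) * (ρ g : Matrix (Fin n) (Fin n) ℤ)
          = (ρ g : Matrix (Fin n) (Fin n) ℤ) * ((ρ g : Matrix (Fin n) (Fin n) ℤ) - 1) := by
        rw [sub_mul, mul_sub, mul_one, one_mul]
      rw [hC, Matrix.mulVec_mulVec, hcom, ← Matrix.mulVec_mulVec, hw', Matrix.mulVec_mulVec,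
        ← Units.val_mul, ← map_mul, mul_inv_cancel, map_one, Units.val_one, Matrix.one_mulVec]
    set γ : Gamma ρ := SemidirectProduct.inl (ofAdd C) with hγ
    have hconj : γ * y ^ k * γ⁻¹ = x := by
      ext
      · apply toAdd.injective
        simp only [hγ, SemidirectProduct.mul_left, SemidirectProduct.mul_right,
          SemidirectProduct.inv_left, SemidirectProduct.inv_right, SemidirectProduct.left_inl,
          SemidirectProduct.right_inl, matAutHom_apply, map_one, one_mul, mul_one,
          toAdd_mul, toAdd_ofAdd, toAdd_inv, Matrix.mulVec_mulVec, MulAut.one_apply,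
          inv_one, mul_one, Units.val_one, Matrix.mulVec_neg, hyk_r]
        have h5 : (ρ g : Matrix (Fin n) (Fin n) ℤ).mulVec C - C = B - A := by
          rw [← hkey, Matrix.sub_mulVec, Matrix.one_mulVec]
        rw [← hA, ← hB]
        have h6 : C + B + -(ρ g : Matrix (Fin n) (Fin n) ℤ).mulVec C = A := by
          rw [eq_comm, ← sub_eq_zero, ← sub_eq_zero.mpr h5]; abel
        rw [h6]
      · simp [hγ, hyk_r]; exact hg
    refine ⟨γ⁻¹, ?_⟩
    rw [hPz, MonoidHom.map_zpowers, hQz']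
    congr 1
    show γ⁻¹ * x * γ⁻¹⁻¹ = y ^ k
    rw [← hconj]
    group
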